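/- For every m ≥ 1, λ > 0 and every Schwartz function f : ℝ^m → ℂ, the FBI transform is an isometry into the weighted space L²_Φ: ∫_{ℝ^{2m}} |T_λ f(x, ξ)|² e^{−λ|ξ|²} dx dξ = ∫_{ℝ^m} |f(y)|² dy. -/

import Mathlib

open MeasureTheory Real Complex Filter
open scoped FourierTransform RealInnerProductSpace ComplexConjugate


variable {V : Type*} [NormedAddCommGroup V] [InnerProductSpace ℝ V]
  [MeasurableSpace V] [BorelSpace V] [FiniteDimensional ℝ V]

lemma continuous_fourier' {g : V → ℂ} (hg : Integrable g) : Continuous (𝓕 g) :=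
  VectorFourier.fourierIntegral_continuous Real.continuous_fourierChar
    (by exact continuous_inner) hg

lemma plancherel_aux {g : V → ℂ} (hg : Integrable g) (hgc : Continuous g)
    (hFg : Integrable (𝓕 g)) :
    (∫ w, ‖𝓕 g w‖ ^ 2) = (∫ y, ‖g y‖ ^ 2) ∧ Integrable (fun w ↦ ‖𝓕 g w‖ ^ 2) := by
  set P : V × V → ℂ :=
    fun p ↦ 𝓕 g p.1 * (Complex.exp ((2 * π * ⟪p.2, p.1⟫ : ℝ) * Complex.I) * conj (g p.2)) with hP
  have hPcont : Continuous P := by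
    apply ((continuous_fourier' hg).comp continuous_fst).mul
    apply Continuous.mul
    · apply Complex.continuous_exp.comp
      apply Continuous.mul _ continuous_const
      exact Complex.continuous_ofReal.comp
        (continuous_const.mul (continuous_inner.comp (continuous_snd.prodMk continuous_fst)))
    · exact Complex.continuous_conj.comp (hgc.comp continuous_snd)
  have hPint : Integrable P (volume.prod volume) := by
    apply Integrable.mono' (hFg.norm.mul_prod hg.norm) hPcont.aestronglyMeasurable
    filter_upwards with p
    rw [hP]
    simp only [norm_mul, Complex.norm_exp_ofReal_mul_I, one_mul,
      Complex.norm_conj]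
    exact le_of_eq rfl
  have hleft : ∀ w, (∫ y, P (w, y)) = 𝓕 g w * conj (𝓕 g w) := by
    intro w
    simp only [hP]
    rw [integral_const_mul]
    congr 1
    rw [Real.fourier_eq' g w, ← integral_conj]
    congr 1 with y
    simp only [smul_eq_mul, map_mul, ← Complex.exp_conj]
    congr 2
    simp only [map_mul, Complex.conj_ofReal, Complex.conj_I]
    push_cast
    ring
  have hright : ∀ y, (∫ w, P (w, y)) = g y * conj (g y) := by
    intro y
    have hPy : ∀ w, P (w, y)
        = (Complex.exp ((2 * π * ⟪w, y⟫ : ℝ) * Complex.I) * 𝓕 g w) * conj (g y) := by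
      intro w
      simp only [hP, real_inner_comm y w]
      ring
    simp_rw [hPy]
    rw [integral_mul_const]
    have hinv : (∫ w, Complex.exp ((2 * π * ⟪w, y⟫ : ℝ) * Complex.I) * 𝓕 g w) = g y := by
      have h := Real.fourierInv_eq' (𝓕 g) y
      simp only [smul_eq_mul] at h
      rw [← h, hgc.fourierInv_fourier_eq hg hFg]
    rw [hinv, mul_comm]
  have hI1 : Integrable (fun w ↦ 𝓕 g w * conj (𝓕 g w)) :=
    hPint.integral_prod_left.congr (.of_forall hleft)
  have hI2 : Integrable (fun y ↦ g y * conj (g y)) :=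
    hPint.integral_prod_right.congr (.of_forall hright)
  have hswap : (∫ w, 𝓕 g w * conj (𝓕 g w)) = ∫ y, g y * conj (g y) := by
    have h := integral_integral_swap (f := fun w y ↦ P (w, y)) hPint
    simp_rw [hleft, hright] at h
    exact h
  constructor
  · calc ∫ w, ‖𝓕 g w‖ ^ 2 = ∫ w, (𝓕 g w * conj (𝓕 g w)).re := by
          congr 1 with w; rw [Complex.mul_conj']; simp [← Complex.ofReal_pow]
      _ = (∫ w, 𝓕 g w * conj (𝓕 g w)).re := Complex.reCLM.integral_comp_comm hI1
      _ = (∫ y, g y * conj (g y)).re := by rw [hswap]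
      _ = ∫ y, (g y * conj (g y)).re := (Complex.reCLM.integral_comp_comm hI2).symm
      _ = ∫ y, ‖g y‖ ^ 2 := by
          congr 1 with y; rw [Complex.mul_conj']; simp [← Complex.ofReal_pow]
  · apply hI1.re.congr
    filter_upwards with w
    rw [Complex.mul_conj']
    simp [← Complex.ofReal_pow]

lemma norm_gauss (b : ℝ) (r : ℝ) :
    ‖Complex.exp (-(b : ℂ) * (r : ℂ) ^ 2)‖ = rexp (-(b * r ^ 2)) := by
  rw [Complex.norm_exp]
  congr 1
  rw [show (-(b : ℂ) * (r : ℂ) ^ 2) = ((-(b * r ^ 2) : ℝ) : ℂ) by push_cast; ring,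
    Complex.ofReal_re]

lemma integrable_gauss0 {b : ℝ} (hb : 0 < b) :
    Integrable (fun v : V ↦ Complex.exp (-(b : ℂ) * (‖v‖ : ℂ) ^ 2)) := by
  have := GaussianFourier.integrable_cexp_neg_mul_sq_norm_add (V := V) (b := (b : ℂ)) (by simpa) 0 0
  simpa using this

lemma integrable_rgauss0 {b : ℝ} (hb : 0 < b) :
    Integrable (fun v : V ↦ rexp (-(b * ‖v‖ ^ 2))) := by
  have h := (integrable_gauss0 (V := V) hb).norm
  apply h.congr
  filter_upwards with v
  rw [norm_gauss]

lemma integrable_gauss {b : ℝ} (hb : 0 < b) (x : V) :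
    Integrable (fun y : V ↦ Complex.exp (-(b : ℂ) * (‖x - y‖ : ℂ) ^ 2)) := by
  have h : (fun y : V ↦ Complex.exp (-(b : ℂ) * (‖x - y‖ : ℂ) ^ 2))
      = fun y : V ↦ Complex.exp (-(b : ℂ) * (‖y - x‖ : ℂ) ^ 2) := by
    funext y; rw [norm_sub_rev]
  rw [h]
  exact (integrable_gauss0 hb).comp_sub_right x

lemma fourier_gauss_eq {b : ℝ} (hb : 0 < b) (x : V) (v : V) :
    𝓕 (fun y ↦ Complex.exp (-(b : ℂ) * (‖x - y‖ : ℂ) ^ 2)) v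
      = Complex.exp (((-2 * π * ⟪x, v⟫ : ℝ) : ℂ) * Complex.I) *
        (((π : ℂ) / (b : ℂ)) ^ ((Module.finrank ℝ V : ℂ) / 2) *
          Complex.exp (-(π : ℂ) ^ 2 * (‖v‖ : ℂ) ^ 2 / (b : ℂ))) := by
  rw [Real.fourier_eq']
  rw [← integral_add_right_eq_self
    (fun y ↦ Complex.exp (((-2 * π * ⟪y, v⟫ : ℝ) : ℂ) * Complex.I) •
      Complex.exp (-(b : ℂ) * (‖x - y‖ : ℂ) ^ 2)) x]
  have key : ∀ y : V, Complex.exp (((-2 * π * ⟪y + x, v⟫ : ℝ) : ℂ) * Complex.I) •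
      Complex.exp (-(b : ℂ) * (‖x - (y + x)‖ : ℂ) ^ 2)
      = Complex.exp (((-2 * π * ⟪x, v⟫ : ℝ) : ℂ) * Complex.I) *
        (Complex.exp (((-2 * π * ⟪y, v⟫ : ℝ) : ℂ) * Complex.I) •
          Complex.exp (-(b : ℂ) * (‖y‖ : ℂ) ^ 2)) := by
    intro y
    have h1 : ‖x - (y + x)‖ = ‖y‖ := by
      rw [show x - (y + x) = -y by abel, norm_neg]
    rw [h1, inner_add_left]
    simp only [smul_eq_mul, ← Complex.exp_add]
    congr 1
    push_cast
    ring
  simp_rw [key]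
  rw [integral_const_mul]
  congr 1
  have hF := fourier_gaussian_innerProductSpace (V := V) (b := (b : ℂ)) (by simpa) v
  rw [Real.fourier_eq'] at hF
  exact hF

lemma integrable_fourier_gauss {b : ℝ} (hb : 0 < b) (x : V) :
    Integrable (𝓕 (fun y ↦ Complex.exp (-(b : ℂ) * (‖x - y‖ : ℂ) ^ 2))) := by
  set C : ℝ := (π / b) ^ ((Module.finrank ℝ V : ℝ) / 2) with hC
  apply Integrable.mono' (g := fun v ↦ C * rexp (-(π ^ 2 / b * ‖v‖ ^ 2)))
    ((integrable_rgauss0 (by positivity)).const_mul C)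
    (continuous_fourier' (integrable_gauss hb x)).aestronglyMeasurable
  filter_upwards with v
  rw [fourier_gauss_eq hb x v]
  rw [norm_mul, norm_mul, Complex.norm_exp_ofReal_mul_I, one_mul,
    Complex.norm_exp]
  have h1 : ‖((π : ℂ) / (b : ℂ)) ^ ((Module.finrank ℝ V : ℂ) / 2)‖ = C := by
    rw [← Complex.ofReal_div, Complex.norm_cpow_eq_rpow_re_of_pos (by positivity)]
    simp [hC]
  rw [h1]
  apply le_of_eq
  congr 1
  have : (-(π : ℂ) ^ 2 * (‖v‖ : ℂ) ^ 2 / (b : ℂ)) = ((-(π ^ 2 * ‖v‖ ^ 2 / b) : ℝ) : ℂ) := by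
    push_cast; ring
  rw [this, Complex.ofReal_re]
  ring_nf

lemma fourier_gaussMul_eq {b : ℝ} (hb : 0 < b) (x : V) {g : V → ℂ}
    (hg : Integrable g) (hgc : Continuous g) (hFg : Integrable (𝓕 g)) (w : V) :
    𝓕 (fun y ↦ Complex.exp (-(b : ℂ) * (‖x - y‖ : ℂ) ^ 2) * g y) w
      = ∫ u, 𝓕 g u * 𝓕 (fun y ↦ Complex.exp (-(b : ℂ) * (‖x - y‖ : ℂ) ^ 2)) (w - u) := by
  set G : V → ℂ := fun y ↦ Complex.exp (-(b : ℂ) * (‖x - y‖ : ℂ) ^ 2) with hG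
  set Q : V → V → ℂ := fun y u ↦
    Complex.exp (((-2 * π * ⟪y, w⟫ : ℝ) : ℂ) * Complex.I) *
      (G y * (Complex.exp (((2 * π * ⟪u, y⟫ : ℝ) : ℂ) * Complex.I) * 𝓕 g u)) with hQ
  have hGnorm : ∀ y, ‖G y‖ = rexp (-(b * ‖x - y‖ ^ 2)) := fun y ↦ norm_gauss b _
  have hGcont : Continuous G := by
    apply Complex.continuous_exp.comp
    apply Continuous.mul continuous_const
    exact (Complex.continuous_ofReal.comp (continuous_const.sub continuous_id).norm).pow 2
  have hQint : Integrable (Function.uncurry Q) (volume.prod volume) := by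
    have hgauss : Integrable (fun y : V ↦ rexp (-(b * ‖x - y‖ ^ 2))) := by
      have h := (integrable_gauss hb x).norm
      apply h.congr
      filter_upwards with y using hGnorm y
    have hbound : Integrable (fun p : V × V ↦ rexp (-(b * ‖x - p.1‖ ^ 2)) * ‖𝓕 g p.2‖)
        (volume.prod volume) := hgauss.mul_prod hFg.norm
    have c1 : Continuous fun p : V × V ↦ (⟪p.1, w⟫ : ℝ) :=
      continuous_inner.comp (continuous_fst.prodMk continuous_const)
    have c2 : Continuous fun p : V × V ↦ (⟪p.2, p.1⟫ : ℝ) :=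
      continuous_inner.comp (continuous_snd.prodMk continuous_fst)
    apply Integrable.mono' hbound
    · apply Continuous.aestronglyMeasurable
      exact (Complex.continuous_exp.comp
          ((Complex.continuous_ofReal.comp (continuous_const.mul c1)).mul continuous_const)).mul
        ((hGcont.comp continuous_fst).mul
          ((Complex.continuous_exp.comp
            ((Complex.continuous_ofReal.comp (continuous_const.mul c2)).mul
              continuous_const)).mul
          ((continuous_fourier' hg).comp continuous_snd)))
    · filter_upwards with p
      rw [Function.uncurry, hQ]
      simp only [norm_mul, Complex.norm_exp_ofReal_mul_I, one_mul]
      rw [hGnorm]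
  have hLHS : 𝓕 (fun y ↦ G y * g y) w = ∫ y, ∫ u, Q y u := by
    rw [Real.fourier_eq']
    congr 1 with y
    rw [smul_eq_mul]
    have hgy : g y = ∫ u, Complex.exp (((2 * π * ⟪u, y⟫ : ℝ) : ℂ) * Complex.I) * 𝓕 g u := by
      have h := Real.fourierInv_eq' (𝓕 g) y
      simp only [smul_eq_mul] at h
      rw [← h, hgc.fourierInv_fourier_eq hg hFg]
    rw [hQ]
    conv_lhs => rw [hgy]
    rw [← integral_const_mul, ← integral_const_mul]
  rw [hLHS, integral_integral_swap hQint]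
  congr 1 with u
  have hQ2 : ∀ y, Q y u = (Complex.exp (((-2 * π * ⟪y, w - u⟫ : ℝ) : ℂ) * Complex.I) * G y)
      * 𝓕 g u := by
    intro y
    rw [hQ]
    have : ((-2 * π * ⟪y, w - u⟫ : ℝ) : ℂ) * Complex.I
        = ((-2 * π * ⟪y, w⟫ : ℝ) : ℂ) * Complex.I + ((2 * π * ⟪u, y⟫ : ℝ) : ℂ) * Complex.I := by
      rw [inner_sub_right, real_inner_comm u y]
      push_cast
      ring
    rw [this, Complex.exp_add]
    ring
  simp_rw [hQ2]
  rw [integral_mul_const, mul_comm]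
  congr 1
  rw [Real.fourier_eq']
  simp_rw [smul_eq_mul]

lemma integrable_fourier_gaussMul {b : ℝ} (hb : 0 < b) (x : V) {g : V → ℂ}
    (hg : Integrable g) (hgc : Continuous g) (hFg : Integrable (𝓕 g)) :
    Integrable (𝓕 (fun y ↦ Complex.exp (-(b : ℂ) * (‖x - y‖ : ℂ) ^ 2) * g y)) := by
  have heq : 𝓕 (fun y ↦ Complex.exp (-(b : ℂ) * (‖x - y‖ : ℂ) ^ 2) * g y)
      = convolution (𝓕 g) (𝓕 (fun y ↦ Complex.exp (-(b : ℂ) * (‖x - y‖ : ℂ) ^ 2)))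
          (ContinuousLinearMap.mul ℝ ℂ) volume := by
    funext w
    rw [fourier_gaussMul_eq hb x hg hgc hFg w]
    rfl
  rw [heq]
  exact hFg.integrable_convolution (ContinuousLinearMap.mul ℝ ℂ) (integrable_fourier_gauss hb x)

lemma continuous_gauss (b : ℝ) (x : V) :
    Continuous fun y : V ↦ Complex.exp (-(b : ℂ) * (‖x - y‖ : ℂ) ^ 2) := by
  apply Complex.continuous_exp.comp
  apply Continuous.mul continuous_const
  exact (Complex.continuous_ofReal.comp (continuous_const.sub continuous_id).norm).pow 2




/-- The FBI transform `T_λ f(x,ξ) = C_m λ^{3m/4} ∫ e^{−(λ/2)((x−y)² − 2iξ·(x−y) − ξ²)} f(y) dy`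
with `C_m = 2^{−m/2} π^{−3m/4}`. -/
noncomputable def fbi {m : ℕ} (lam : ℝ) (f : EuclideanSpace ℝ (Fin m) → ℂ)
    (z : EuclideanSpace ℝ (Fin m) × EuclideanSpace ℝ (Fin m)) : ℂ :=
  ((2 : ℝ) ^ (-(m : ℝ) / 2) * Real.pi ^ (-(3 * (m : ℝ)) / 4) * lam ^ (3 * (m : ℝ) / 4)) •
    ∫ y : EuclideanSpace ℝ (Fin m),
      Complex.exp (-((lam : ℂ) / 2) *
        (((inner ℝ (z.1 - y) (z.1 - y) : ℝ) : ℂ)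
          - 2 * Complex.I * ((inner ℝ z.2 (z.1 - y) : ℝ) : ℂ)
          - ((inner ℝ z.2 z.2 : ℝ) : ℂ))) * f y

/-- the FBI transform is an isometry into the weighted space `L²_Φ`,
`Φ(x,ξ) = e^{−λ|ξ|²}`. -/
theorem statement10 (m : ℕ) (hm : 1 ≤ m) (lam : ℝ) (hlam : 0 < lam)
    (f : SchwartzMap (EuclideanSpace ℝ (Fin m)) ℂ) :
    ∫ z : EuclideanSpace ℝ (Fin m) × EuclideanSpace ℝ (Fin m),
        ‖fbi lam (⇑f) z‖ ^ 2 * Real.exp (-lam * ‖z.2‖ ^ 2)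
      = ∫ y : EuclideanSpace ℝ (Fin m), ‖f y‖ ^ 2 := by
  have hπ : (0 : ℝ) < π := pi_pos
  set b : ℝ := lam / 2 with hbdef
  have hb : 0 < b := by positivity
  set c : ℝ := (2 : ℝ) ^ (-(m : ℝ) / 2) * π ^ (-(3 * (m : ℝ)) / 4) * lam ^ (3 * (m : ℝ) / 4)
    with hcdef
  have hc : 0 < c := by positivity
  set R : ℝ := lam / (2 * π) with hRdef
  have hR : 0 < R := by positivity
  set g : EuclideanSpace ℝ (Fin m) → EuclideanSpace ℝ (Fin m) → ℂ :=
    fun x y ↦ Complex.exp (-(b : ℂ) * (‖x - y‖ : ℂ) ^ 2) * f y with hgdef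
  -- rewriting the Fourier transform at scaled frequency
  have hinner8 : ∀ x ξ : EuclideanSpace ℝ (Fin m),
      𝓕 (g x) (R • ξ)
        = ∫ y, Complex.exp (((-(lam * ⟪y, ξ⟫) : ℝ) : ℂ) * Complex.I) * g x y := by
    intro x ξ
    rw [Real.fourier_eq']
    congr 1 with y
    have h1 : (-2 * π * ⟪y, R • ξ⟫ : ℝ) = -(lam * ⟪y, ξ⟫) := by
      rw [real_inner_smul_right, hRdef]
      field_simp
    rw [smul_eq_mul, h1]
  -- the key pointwise identity
  have hfbi : ∀ x ξ : EuclideanSpace ℝ (Fin m), fbi lam (⇑f) (x, ξ)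
      = c • (Complex.exp (((lam / 2 * ‖ξ‖ ^ 2 : ℝ) : ℂ)) *
          (Complex.exp (((lam * ⟪x, ξ⟫ : ℝ) : ℂ) * Complex.I) * 𝓕 (g x) (R • ξ))) := by
    intro x ξ
    rw [hinner8 x ξ]
    rw [show fbi lam (⇑f) (x, ξ) = c • ∫ y, Complex.exp (-((lam : ℂ) / 2) *
        (((inner ℝ (x - y) (x - y) : ℝ) : ℂ) - 2 * Complex.I * ((inner ℝ ξ (x - y) : ℝ) : ℂ)
          - ((inner ℝ ξ ξ : ℝ) : ℂ))) * f y from rfl]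
    congr 1
    rw [← integral_const_mul, ← integral_const_mul]
    congr 1 with y
    rw [hgdef]
    simp only
    simp only [← mul_assoc, ← Complex.exp_add]
    congr 1
    rw [real_inner_self_eq_norm_sq, real_inner_self_eq_norm_sq, inner_sub_right,
      real_inner_comm x ξ, real_inner_comm y ξ, hbdef]
    push_cast
    ring
  have hpoint : ∀ x ξ : EuclideanSpace ℝ (Fin m),
      ‖fbi lam (⇑f) (x, ξ)‖ ^ 2 * rexp (-lam * ‖ξ‖ ^ 2)
        = c ^ 2 * ‖𝓕 (g x) (R • ξ)‖ ^ 2 := by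
    intro x ξ
    rw [hfbi x ξ, norm_smul, Real.norm_eq_abs, abs_of_pos hc, norm_mul, norm_mul]
    rw [Complex.norm_exp_ofReal_mul_I, Complex.norm_exp, Complex.ofReal_re, one_mul]
    have hexp : (rexp (lam / 2 * ‖ξ‖ ^ 2)) ^ 2 * rexp (-lam * ‖ξ‖ ^ 2) = 1 := by
      rw [sq, ← Real.exp_add, ← Real.exp_add,
        show lam / 2 * ‖ξ‖ ^ 2 + lam / 2 * ‖ξ‖ ^ 2 + -lam * ‖ξ‖ ^ 2 = 0 by ring, Real.exp_zero]
    calc (c * (rexp (lam / 2 * ‖ξ‖ ^ 2) * ‖𝓕 (g x) (R • ξ)‖)) ^ 2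
          * rexp (-lam * ‖ξ‖ ^ 2)
        = c ^ 2 * ‖𝓕 (g x) (R • ξ)‖ ^ 2
            * ((rexp (lam / 2 * ‖ξ‖ ^ 2)) ^ 2 * rexp (-lam * ‖ξ‖ ^ 2)) := by ring
      _ = c ^ 2 * ‖𝓕 (g x) (R • ξ)‖ ^ 2 := by
            rw [hexp, mul_one]

  -- integrability facts
  have hgcont : ∀ x, Continuous (g x) := fun x ↦ (continuous_gauss b x).mul f.continuous
  have hgint : ∀ x, Integrable (g x) := by
    intro x
    apply Integrable.mono' ((f.integrable (μ := volume)).norm) (hgcont x).aestronglyMeasurable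
    filter_upwards with y
    rw [hgdef]
    simp only
    rw [norm_mul, norm_gauss]
    apply mul_le_of_le_one_left (norm_nonneg _)
    rw [Real.exp_le_one_iff]
    simp only [neg_nonpos]
    positivity
  have hFf : Integrable (𝓕 ⇑f) := by
    simpa [SchwartzMap.fourier_coe] using ((SchwartzMap.fourierTransformCLM ℂ f).integrable (μ := volume))
  have hFgint : ∀ x, Integrable (𝓕 (g x)) := fun x ↦
    integrable_fourier_gaussMul hb x f.integrable f.continuous hFf
  have hplan := fun x ↦ plancherel_aux (hgint x) (hgcont x) (hFgint x)
  -- the value of ‖g x y‖ ^ 2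
  have hgnorm : ∀ x y, ‖g x y‖ ^ 2 = rexp (-(lam * ‖x - y‖ ^ 2)) * ‖f y‖ ^ 2 := by
    intro x y
    rw [hgdef]
    simp only
    rw [norm_mul, mul_pow]
    congr 1
    rw [norm_gauss, sq, ← Real.exp_add]
    congr 1
    rw [hbdef]
    ring
  -- the scaled ξ-integral, for each x
  have hxint : ∀ x, (∫ ξ, c ^ 2 * ‖𝓕 (g x) (R • ξ)‖ ^ 2)
      = c ^ 2 * R⁻¹ ^ m * ∫ y, rexp (-(lam * ‖x - y‖ ^ 2)) * ‖f y‖ ^ 2 := by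
    intro x
    rw [integral_const_mul, Measure.integral_comp_smul volume
      (fun w ↦ ‖𝓕 (g x) w‖ ^ 2) R, (hplan x).1]
    rw [finrank_euclideanSpace_fin, smul_eq_mul, abs_of_pos (by positivity), inv_pow]
    rw [show (∫ y, ‖g x y‖ ^ 2) = ∫ y, rexp (-(lam * ‖x - y‖ ^ 2)) * ‖f y‖ ^ 2 from
      integral_congr_ae (.of_forall fun y ↦ hgnorm x y)]
    ring
  have hxInt : ∀ x, Integrable (fun ξ ↦ c ^ 2 * ‖𝓕 (g x) (R • ξ)‖ ^ 2) := fun x ↦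
    ((integrable_comp_smul_iff volume (fun w ↦ ‖𝓕 (g x) w‖ ^ 2) (ne_of_gt hR)).2
      (hplan x).2).const_mul _
  -- integrability of ‖f‖^2
  have hfnorm2 : Integrable (fun y : EuclideanSpace ℝ (Fin m) ↦ ‖f y‖ ^ 2) := by
    obtain ⟨C, hC⟩ := f.decay 0 0
    have hC' : ∀ y, ‖f y‖ ≤ C := by
      intro y
      have := hC.2 y
      simpa using this
    apply Integrable.mono' ((f.integrable (μ := volume)).norm.const_mul C)
      (f.continuous.norm.pow 2).aestronglyMeasurable
    filter_upwards with y
    have hnn : ‖(‖f y‖ ^ 2 : ℝ)‖ = ‖f y‖ ^ 2 := Real.norm_of_nonneg (by positivity)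
    simp only [Pi.pow_apply]
    rw [hnn, sq]
    exact mul_le_mul (hC' y) le_rfl (norm_nonneg _) ((norm_nonneg _).trans (hC' y))
  -- the x-gaussian integral
  have hinner_x : ∀ y : EuclideanSpace ℝ (Fin m),
      (∫ x, rexp (-(lam * ‖x - y‖ ^ 2))) = (π / lam) ^ ((m : ℝ) / 2) := by
    intro y
    rw [integral_sub_right_eq_self (fun v ↦ rexp (-(lam * ‖v‖ ^ 2))) y]
    have h := GaussianFourier.integral_rexp_neg_mul_sq_norm
      (V := EuclideanSpace ℝ (Fin m)) hlam
    simpa [neg_mul, finrank_euclideanSpace_fin] using h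
  -- the two-variable gaussian-weighted integrand
  have hQmeas : Continuous (fun p : EuclideanSpace ℝ (Fin m) × EuclideanSpace ℝ (Fin m) ↦
      rexp (-(lam * ‖p.1 - p.2‖ ^ 2)) * ‖f p.2‖ ^ 2) := by
    apply Continuous.mul
    · apply Real.continuous_exp.comp
      exact (continuous_const.mul ((continuous_fst.sub continuous_snd).norm.pow 2)).neg
    · exact ((f.continuous.comp continuous_snd).norm.pow 2)
  have hQint : Integrable (fun p : EuclideanSpace ℝ (Fin m) × EuclideanSpace ℝ (Fin m) ↦
      rexp (-(lam * ‖p.1 - p.2‖ ^ 2)) * ‖f p.2‖ ^ 2) (volume.prod volume) := by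
    apply (integrable_prod_iff' hQmeas.aestronglyMeasurable).2
    constructor
    · filter_upwards with y
      exact ((integrable_rgauss0 hlam).comp_sub_right y).mul_const _
    · have hval : ∀ y : EuclideanSpace ℝ (Fin m),
          (∫ x, ‖rexp (-(lam * ‖x - y‖ ^ 2)) * ‖f y‖ ^ 2‖)
            = (π / lam) ^ ((m : ℝ) / 2) * ‖f y‖ ^ 2 := by
        intro y
        simp only [Real.norm_eq_abs, abs_mul, Real.abs_exp, _root_.abs_pow, abs_norm]
        rw [integral_mul_const, hinner_x y]
      apply Integrable.congr (hfnorm2.const_mul ((π / lam) ^ ((m : ℝ) / 2)))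
      filter_upwards with y
      exact (hval y).symm
  -- value of the double (x,y) integral
  have hHint : Integrable (fun x ↦ ∫ y, rexp (-(lam * ‖x - y‖ ^ 2)) * ‖f y‖ ^ 2) volume :=
    hQint.integral_prod_left
  have hHval : (∫ x, ∫ y, rexp (-(lam * ‖x - y‖ ^ 2)) * ‖f y‖ ^ 2)
      = (π / lam) ^ ((m : ℝ) / 2) * ∫ y, ‖f y‖ ^ 2 := by
    rw [integral_integral_swap
      (f := fun x y ↦ rexp (-(lam * ‖x - y‖ ^ 2)) * ‖f y‖ ^ 2) hQint]
    have : ∀ y : EuclideanSpace ℝ (Fin m),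
        (∫ x, rexp (-(lam * ‖x - y‖ ^ 2)) * ‖f y‖ ^ 2)
          = (π / lam) ^ ((m : ℝ) / 2) * ‖f y‖ ^ 2 := by
      intro y
      rw [integral_mul_const, hinner_x y]
    rw [integral_congr_ae (.of_forall this), integral_const_mul]
  -- measurability on the product
  have hker : Continuous (fun q : (EuclideanSpace ℝ (Fin m) × EuclideanSpace ℝ (Fin m))
      × EuclideanSpace ℝ (Fin m) ↦
      Complex.exp (((-2 * π * ⟪q.2, R • q.1.2⟫ : ℝ) : ℂ) * Complex.I) • g q.1.1 q.2) := by
    apply Continuous.fun_smul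
    · apply Complex.continuous_exp.comp
      apply Continuous.mul _ continuous_const
      apply Complex.continuous_ofReal.comp
      apply continuous_const.mul
      exact continuous_inner.comp (continuous_snd.prodMk (continuous_fst.snd.const_smul R))
    · rw [hgdef]
      apply Continuous.mul
      · apply Complex.continuous_exp.comp
        apply Continuous.mul continuous_const
        exact (Complex.continuous_ofReal.comp (continuous_fst.fst.sub continuous_snd).norm).pow 2
      · exact f.continuous.comp continuous_snd
  have hFsm : StronglyMeasurable (fun z : EuclideanSpace ℝ (Fin m) × EuclideanSpace ℝ (Fin m) ↦
      𝓕 (g z.1) (R • z.2)) := by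
    have h1 := StronglyMeasurable.integral_prod_right' (ν := volume) hker.stronglyMeasurable
    have h2 : (fun z : EuclideanSpace ℝ (Fin m) × EuclideanSpace ℝ (Fin m) ↦
        𝓕 (g z.1) (R • z.2)) = fun z ↦ ∫ y,
          Complex.exp (((-2 * π * ⟪y, R • z.2⟫ : ℝ) : ℂ) * Complex.I) • g z.1 y :=
      funext fun z ↦ by rw [Real.fourier_eq']
    rw [h2]
    exact h1
  have hFmeas : AEStronglyMeasurable
      (fun z : EuclideanSpace ℝ (Fin m) × EuclideanSpace ℝ (Fin m) ↦
        c ^ 2 * ‖𝓕 (g z.1) (R • z.2)‖ ^ 2) (volume.prod volume) := by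
    have h3 : StronglyMeasurable (fun z : EuclideanSpace ℝ (Fin m) × EuclideanSpace ℝ (Fin m) ↦
        c ^ 2 * (‖𝓕 (g z.1) (R • z.2)‖ * ‖𝓕 (g z.1) (R • z.2)‖)) :=
      stronglyMeasurable_const.mul (hFsm.norm.mul hFsm.norm)
    apply h3.aestronglyMeasurable.congr
    filter_upwards with z
    ring
  -- integrability on the product
  have hFint' : Integrable (fun z : EuclideanSpace ℝ (Fin m) × EuclideanSpace ℝ (Fin m) ↦
      c ^ 2 * ‖𝓕 (g z.1) (R • z.2)‖ ^ 2) (volume.prod volume) := by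
    apply (integrable_prod_iff hFmeas).2
    constructor
    · filter_upwards with x
      exact hxInt x
    · have hval : ∀ x, (∫ ξ, ‖c ^ 2 * ‖𝓕 (g x) (R • ξ)‖ ^ 2‖)
          = c ^ 2 * R⁻¹ ^ m * ∫ y, rexp (-(lam * ‖x - y‖ ^ 2)) * ‖f y‖ ^ 2 := by
        intro x
        rw [← hxint x]
        apply integral_congr_ae
        filter_upwards with ξ
        exact Real.norm_of_nonneg (by positivity)
      apply Integrable.congr ((hHint.const_mul (c ^ 2 * R⁻¹ ^ m)))
      filter_upwards with x
      exact (hval x).symm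
  -- the constants
  have hconst : c ^ 2 * R⁻¹ ^ m * (π / lam) ^ ((m : ℝ) / 2) = 1 := by
    have h2 : (0 : ℝ) < 2 := two_pos
    have hRinv : R⁻¹ = 2 * π / lam := by rw [hRdef, inv_div]
    rw [pow_two, hcdef, hRinv, ← Real.rpow_natCast (2 * π / lam) m]
    simp only [Real.rpow_def_of_pos h2, Real.rpow_def_of_pos hπ, Real.rpow_def_of_pos hlam,
      Real.rpow_def_of_pos (show (0:ℝ) < 2 * π / lam by positivity),
      Real.rpow_def_of_pos (show (0:ℝ) < π / lam by positivity)]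
    rw [Real.log_div (by positivity) (ne_of_gt hlam),
      Real.log_mul (by norm_num) (ne_of_gt hπ),
      Real.log_div (ne_of_gt hπ) (ne_of_gt hlam)]
    simp only [← Real.exp_add]
    rw [Real.exp_eq_one_iff]
    push_cast
    ring
  -- final assembly
  calc ∫ z : EuclideanSpace ℝ (Fin m) × EuclideanSpace ℝ (Fin m),
        ‖fbi lam (⇑f) z‖ ^ 2 * rexp (-lam * ‖z.2‖ ^ 2)
      = ∫ z : EuclideanSpace ℝ (Fin m) × EuclideanSpace ℝ (Fin m),
          c ^ 2 * ‖𝓕 (g z.1) (R • z.2)‖ ^ 2 :=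
        integral_congr_ae (.of_forall fun z ↦ hpoint z.1 z.2)
    _ = ∫ x, ∫ ξ, c ^ 2 * ‖𝓕 (g x) (R • ξ)‖ ^ 2 := by
        rw [Measure.volume_eq_prod, integral_prod _ hFint']
    _ = ∫ x, c ^ 2 * R⁻¹ ^ m * ∫ y, rexp (-(lam * ‖x - y‖ ^ 2)) * ‖f y‖ ^ 2 :=
        integral_congr_ae (.of_forall fun x ↦ hxint x)
    _ = c ^ 2 * R⁻¹ ^ m * ∫ x, ∫ y, rexp (-(lam * ‖x - y‖ ^ 2)) * ‖f y‖ ^ 2 :=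
        integral_const_mul _ _
    _ = c ^ 2 * R⁻¹ ^ m * ((π / lam) ^ ((m : ℝ) / 2) * ∫ y, ‖f y‖ ^ 2) := by rw [hHval]
    _ = ∫ y, ‖f y‖ ^ 2 := by rw [← mul_assoc, hconst, one_mul]
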